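/- Let q be a prime power and m > 4. Let α be a primitive element of F_{q^m} (a generator of the multiplicative group F_{q^m}^*), and let γ ∈ F_q be a quadratic non-residue in F_q (i.e., γ ≠ x² for every x ∈ F_q) such that, in F_{q^m}, γ ≠ (α^{q^s} + α)² for every integer s with 0 < s < m and gcd(s, m) = 1. Let C ⊆ F_{q^m}^4 be the F_{q^m}-span of the two vectors (1, 0, α, α²) and (0, 1, α², γα). Then C is an MRD code of dimension 2 (its minimum rank distance is 3), and C is not a generalized Gabidulin code: there exist no integer s with gcd(s, m) = 1 and no g_1, g_2, g_3, g_4 ∈ F_{q^m} linearly independent over F_q such that C equals the F_{q^m}-span of (g_1, g_2, g_3, g_4) and (g_1^{q^s}, g_2^{q^s}, g_3^{q^s}, g_4^{q^s}). -/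

import Mathlib

open Matrix

/-- The rank over the subfield `Fq` of a vector with entries in `K`:
the `Fq`-dimension of the `Fq`-span of its coordinates. -/
noncomputable def rankQ (Fq : Type) {K : Type} [Field Fq] [Field K] [Algebra Fq K] {n : ℕ}
    (v : Fin n → K) : ℕ :=
  Module.finrank Fq (Submodule.span Fq (Set.range v))

/-- The minimum rank distance of a linear rank-metric code `C ⊆ K^n`. -/
noncomputable def minRankDist (Fq : Type) {K : Type} [Field Fq] [Field K] [Algebra Fq K] {n : ℕ}
    (C : Submodule K (Fin n → K)) : ℕ :=
  sInf (rankQ Fq '' {c : Fin n → K | c ∈ C ∧ c ≠ 0})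

/-- A linear code `C ⊆ K^n` of dimension `k` over `K` is MRD if its minimum
rank distance equals `n - k + 1`. -/
def IsMRD (Fq : Type) {K : Type} [Field Fq] [Field K] [Algebra Fq K] {n : ℕ}
    (C : Submodule K (Fin n → K)) (k : ℕ) : Prop :=
  Module.finrank K C = k ∧ minRankDist Fq C = n - k + 1

/-- `G` is a generator matrix of `C`: its rows form a `K`-basis of `C`. -/
def IsGenMat {K : Type} [Field K] {k n : ℕ} (C : Submodule K (Fin n → K))
    (G : Matrix (Fin k) (Fin n) K) : Prop :=
  LinearIndependent K (fun i => G i) ∧ Submodule.span K (Set.range fun i => G i) = C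


lemma aux_pow_li {q m : ℕ} (Fq K : Type) [Field Fq] [Fintype Fq] [Field K] [Fintype K]
    [Algebra Fq K] (hq : Fintype.card Fq = q) (hK : Fintype.card K = q ^ m)
    (α : K) (hα : ∀ x : K, x ≠ 0 → ∃ i : ℕ, x = α ^ i)
    (n : ℕ) (hn : n ≤ m) : LinearIndependent Fq (fun i : Fin n => α ^ (i : ℕ)) := by
  have hq2 : 2 ≤ q := by
    have := Fintype.one_lt_card (α := Fq); omega
  have hfr : Module.finrank Fq K = m := by
    have h1 : Fintype.card K = Fintype.card Fq ^ Module.finrank Fq K := Module.card_eq_pow_finrank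
    rw [hq, hK] at h1
    exact (Nat.pow_right_injective hq2 h1.symm)
  have htop : IntermediateField.adjoin Fq ({α} : Set K) = ⊤ := by
    rw [eq_top_iff]
    intro x _
    by_cases hx : x = 0
    · exact hx ▸ zero_mem _
    · obtain ⟨i, rfl⟩ := hα x hx
      exact pow_mem (IntermediateField.mem_adjoin_simple_self Fq α) i
  have hdeg : (minpoly Fq α).natDegree = m := by
    have hint : IsIntegral Fq α := IsIntegral.of_finite Fq α
    have h2 := IntermediateField.adjoin.finrank hint
    rw [htop] at h2
    rw [← h2, IntermediateField.finrank_top', hfr]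
  have hnd : n ≤ (minpoly Fq α).natDegree := by omega
  have := (linearIndependent_pow (K := Fq) α).comp (Fin.castLE hnd)
    (Fin.castLE_injective hnd)
  exact this


lemma aux_frob_ne {q m t : ℕ} (K : Type) [Field K] [Fintype K]
    (hK : Fintype.card K = q ^ m) (hq2 : 2 ≤ q)
    (ht0 : 0 < t) (htm : t < m)
    (α : K) (hα : ∀ x : K, x ≠ 0 → ∃ i : ℕ, x = α ^ i) :
    α ^ q ^ t ≠ α := by
  intro h
  classical
  have hqt2 : 2 ≤ q ^ t := le_trans hq2 (Nat.le_self_pow (by omega) q)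
  have hfix : ∀ x : K, x ^ q ^ t = x := by
    intro x
    by_cases hx : x = 0
    · rw [hx, zero_pow (by positivity)]
    · obtain ⟨i, rfl⟩ := hα x hx
      rw [pow_right_comm, h]
  set P : Polynomial K := Polynomial.X ^ q ^ t - Polynomial.X with hP
  have hdeg : P.natDegree = q ^ t := by
    rw [hP, Polynomial.natDegree_sub_eq_left_of_natDegree_lt, Polynomial.natDegree_X_pow]
    rw [Polynomial.natDegree_X, Polynomial.natDegree_X_pow]; omega
  have hP0 : P ≠ 0 := fun h0 => by simp [h0] at hdeg; omega
  have hroots : ∀ x : K, x ∈ P.roots := by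
    intro x
    rw [Polynomial.mem_roots hP0]
    simp [hP, Polynomial.IsRoot, hfix x]
  have h1 : Fintype.card K ≤ P.roots.toFinset.card := by
    rw [← Finset.card_univ]
    exact Finset.card_le_card (fun x _ => Multiset.mem_toFinset.mpr (hroots x))
  have h2 : (P.roots.toFinset.card : ℕ) ≤ P.roots.card := Multiset.toFinset_card_le _
  have h3 := P.card_roots'
  have h4 : q ^ t < q ^ m := Nat.pow_lt_pow_right (by omega) htm
  omega



lemma aux_rank_ge {q m : ℕ} (Fq K : Type) [Field Fq] [Fintype Fq] [Field K] [Fintype K]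
    [Algebra Fq K] (hq : Fintype.card Fq = q) (hK : Fintype.card K = q ^ m) (hm : 4 < m)
    (α : K) (hα : ∀ x : K, x ≠ 0 → ∃ i : ℕ, x = α ^ i)
    (γ : Fq) (hγQNR : ∀ x : Fq, γ ≠ x ^ 2)
    (hpow5 : LinearIndependent Fq (fun i : Fin 5 => α ^ (i : ℕ)))
    (x : Fin 4 → K)
    (hx : x ∈ Submodule.span K
      ({![1, 0, α, α ^ 2], ![0, 1, α ^ 2, algebraMap Fq K γ * α]} : Set (Fin 4 → K)))
    (hx0 : x ≠ 0) : 3 ≤ rankQ Fq x := by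
  classical
  set e : Fq →+* K := (algebraMap Fq K) with he
  obtain ⟨a, b, hab⟩ := Submodule.mem_span_pair.mp hx
  have hab0 : ¬(a = 0 ∧ b = 0) := by
    rintro ⟨rfl, rfl⟩
    simp at hab
    exact hx0 hab.symm
  have hx0' : x 0 = a := by rw [← hab]; simp
  have hx1 : x 1 = b := by rw [← hab]; simp
  have hx2 : x 2 = a * α + b * α ^ 2 := by rw [← hab]; simp
  have hx3 : x 3 = a * α ^ 2 + b * (e γ * α) := by rw [← hab]; simp
  -- the linear combination map
  set T : (Fin 4 → Fq) →ₗ[Fq] K := Fintype.linearCombination Fq x with hT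
  have hrange : Submodule.span Fq (Set.range x) = LinearMap.range T := by
    rw [hT, Fintype.range_linearCombination]
  -- P and Q
  set P : (Fin 4 → Fq) → K := fun l => e (l 0) + e (l 2) * α + e (l 3) * α ^ 2 with hPdef
  set Q : (Fin 4 → Fq) → K := fun l => e (l 1) + e (l 2) * α ^ 2 + e (l 3) * (e γ * α) with hQdef
  have hTPQ : ∀ l : Fin 4 → Fq, T l = a * P l + b * Q l := by
    intro l
    rw [hT, Fintype.linearCombination_apply, Fin.sum_univ_four]
    simp only [Algebra.smul_def, hx0', hx1, hx2, hx3, hPdef, hQdef]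
    ring
  -- kernel has dimension ≤ 1
  have hker : Module.finrank Fq (LinearMap.ker T) ≤ 1 := by
    by_contra hcon
    push_neg at hcon
    obtain ⟨f, hf⟩ := exists_linearIndependent_of_le_finrank (R := Fq) (M := ↥(LinearMap.ker T)) (n := 2) (by omega)
    have hfi : LinearIndependent Fq (fun i => ((f i : Fin 4 → Fq))) :=
      hf.map' (LinearMap.ker T).subtype (Submodule.ker_subtype _)
    set l : Fin 4 → Fq := (f 0 : Fin 4 → Fq) with hl
    set u : Fin 4 → Fq := (f 1 : Fin 4 → Fq) with hu
    have hTl : T l = 0 := (f 0).2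
    have hTu : T u = 0 := (f 1).2
    have heql : a * P l + b * Q l = 0 := by rw [← hTPQ]; exact hTl
    have hequ : a * P u + b * Q u = 0 := by rw [← hTPQ]; exact hTu
    -- D = 0
    have hD : P l * Q u - P u * Q l = 0 := by
      rcases (not_and_or.mp hab0) with ha | hb
      · have h1 : a * (P l * Q u - P u * Q l) = 0 := by linear_combination Q u * heql - Q l * hequ
        exact (mul_eq_zero.mp h1).resolve_left ha
      · have h1 : b * (P l * Q u - P u * Q l) = 0 := by linear_combination P l * hequ - P u * heql
        exact (mul_eq_zero.mp h1).resolve_left hb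
    -- extract coefficients
    set m01 : Fq := l 0 * u 1 - l 1 * u 0 with hm01
    set m02 : Fq := l 0 * u 2 - l 2 * u 0 with hm02
    set m03 : Fq := l 0 * u 3 - l 3 * u 0 with hm03
    set m12 : Fq := l 1 * u 2 - l 2 * u 1 with hm12
    set m13 : Fq := l 1 * u 3 - l 3 * u 1 with hm13
    set m23 : Fq := l 2 * u 3 - l 3 * u 2 with hm23
    set d : Fin 5 → Fq := ![m01, γ * m03 - m12, m02 - m13 + γ * m23, 0, -m23] with hd
    have hsum : ∑ i : Fin 5, d i • α ^ (i : ℕ) = P l * Q u - P u * Q l := by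
      rw [Fin.sum_univ_five]
      simp only [hd, Matrix.cons_val_zero, Matrix.cons_val_one, Matrix.head_cons,
        Matrix.cons_val_two, Matrix.tail_cons, Matrix.cons_val_three, Matrix.cons_val_four,
        Algebra.smul_def, hPdef, hQdef, hm01, hm02, hm03, hm12, hm13, hm23,
        map_sub, map_add, _root_.map_mul, map_neg, map_zero,
        show ((4:Fin 5):ℕ) = 4 from rfl, show ((3:Fin 5):ℕ) = 3 from rfl,
        show ((2:Fin 5):ℕ) = 2 from rfl, Fin.val_zero, Fin.val_one]
      ring
    have hdz : ∀ i, d i = 0 := by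
      apply Fintype.linearIndependent_iff.mp hpow5 d
      rw [hsum, hD]
    have h01 : m01 = 0 := hdz 0
    have h1' : γ * m03 - m12 = 0 := hdz 1
    have h2' : m02 - m13 + γ * m23 = 0 := hdz 2
    have h23 : m23 = 0 := by have := hdz 4; simpa [hd] using this
    have h12 : m12 = γ * m03 := by linear_combination -h1'
    have h13 : m13 = m02 := by linear_combination -h2' + γ * h23
    -- Pluecker
    have hpl : m01 * m23 - m02 * m13 + m03 * m12 = 0 := by
      simp only [hm01, hm02, hm03, hm12, hm13, hm23]; ring
    have hkey : γ * m03 ^ 2 = m02 ^ 2 := by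
      linear_combination hpl - m01 * h23 + m02 * h13 - m03 * h12
    have h03 : m03 = 0 := by
      by_contra h03
      exact hγQNR (m02 * m03⁻¹) (by field_simp; linear_combination hkey)
    have h02 : m02 = 0 := by
      have : m02 ^ 2 = 0 := by rw [← hkey, h03]; ring
      exact pow_eq_zero_iff (by norm_num) |>.mp this
    have h12' : m12 = 0 := by rw [h12, h03, mul_zero]
    have h13' : m13 = 0 := by rw [h13, h02]
    -- all minors vanish
    have hmin : ∀ i j : Fin 4, l i * u j - l j * u i = 0 := by
      intro i j
      have e01 : l 0 * u 1 - l 1 * u 0 = 0 := by linear_combination h01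
      have e02 : l 0 * u 2 - l 2 * u 0 = 0 := by linear_combination h02
      have e03 : l 0 * u 3 - l 3 * u 0 = 0 := by linear_combination h03
      have e12 : l 1 * u 2 - l 2 * u 1 = 0 := by linear_combination h12'
      have e13 : l 1 * u 3 - l 3 * u 1 = 0 := by linear_combination h13'
      have e23 : l 2 * u 3 - l 3 * u 2 = 0 := by linear_combination h23
      fin_cases i <;> fin_cases j <;>
        simp only [Fin.zero_eta, Fin.mk_one, show (⟨2, by omega⟩ : Fin 4) = 2 from rfl,
          show (⟨3, by omega⟩ : Fin 4) = 3 from rfl] <;>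
        first
          | ring1
          | linear_combination e01 | linear_combination -e01
          | linear_combination e02 | linear_combination -e02
          | linear_combination e03 | linear_combination -e03
          | linear_combination e12 | linear_combination -e12
          | linear_combination e13 | linear_combination -e13
          | linear_combination e23 | linear_combination -e23
    -- contradiction with independence
    have hzero : ∀ i0 : Fin 4, u i0 = 0 ∧ l i0 = 0 := by
      intro i0
      have happ := Fintype.linearIndependent_iff.mp hfi ![u i0, -(l i0)] (by
        rw [Fin.sum_univ_two]
        funext j
        simp only [Matrix.cons_val_zero, Matrix.cons_val_one, Matrix.head_cons,
          Pi.add_apply, Pi.smul_apply, smul_eq_mul, Pi.zero_apply]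
        show u i0 * l j + -(l i0) * u j = 0
        linear_combination hmin j i0)
      constructor
      · simpa using happ 0
      · have := happ 1; simpa using this
    have hl0 : l = 0 := funext fun i => (hzero i).2
    have := Fintype.linearIndependent_iff.mp hfi ![1, 0] (by
      rw [Fin.sum_univ_two]
      funext j
      simp only [Matrix.cons_val_zero, Matrix.cons_val_one, Matrix.head_cons]
      show (1 : Fq) • l j + (0 : Fq) • u j = 0
      simp [hl0, congrFun hl0 j])
    have h1 := this 0
    simp at h1
  -- rank-nullity
  have hrn := LinearMap.finrank_range_add_finrank_ker T
  rw [Module.finrank_fin_fun] at hrn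
  rw [rankQ, hrange]
  omega


open Matrix

lemma aux_not_gab {q m : ℕ} (Fq K : Type) [Field Fq] [Fintype Fq] [Field K] [Fintype K]
    [Algebra Fq K] (hq : Fintype.card Fq = q) (hK : Fintype.card K = q ^ m)
    (hm : 4 < m)
    (α : K) (hα : ∀ x : K, x ≠ 0 → ∃ i : ℕ, x = α ^ i)
    (γ : Fq)
    (hγ : ∀ s : ℕ, 0 < s → s < m → Nat.gcd s m = 1 →
      algebraMap Fq K γ ≠ (α ^ q ^ s + α) ^ 2)
    (C : Submodule K (Fin 4 → K))
    (hC : C = Submodule.span K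
      ({![1, 0, α, α ^ 2], ![0, 1, α ^ 2, algebraMap Fq K γ * α]} : Set (Fin 4 → K))) :
    ¬ ∃ (s : ℕ) (g : Fin 4 → K), Nat.gcd s m = 1 ∧ LinearIndependent Fq g ∧
        C = Submodule.span K
          ({(fun j => g j), (fun j => (g j) ^ q ^ s)} : Set (Fin 4 → K)) := by
  classical
  rintro ⟨s, g, hgcd, -, hCeq⟩
  set e : Fq →+* K := (algebraMap Fq K) with he
  have hq2 : 2 ≤ q := by have := Fintype.one_lt_card (α := Fq); omega
  -- reduce s mod m
  set t : ℕ := s % m with ht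
  have hgcd' : Nat.gcd t m = 1 := by
    rw [ht, ← Nat.gcd_rec m s, Nat.gcd_comm m s]; exact hgcd
  have ht0 : 0 < t := by
    rcases Nat.eq_zero_or_pos t with h0 | h; · rw [h0] at hgcd'; simp at hgcd'; omega
    exact h
  have htm : t < m := Nat.mod_lt _ (by omega)
  -- Frobenius periodicity
  have hqs : q ^ s = (q ^ m) ^ (s / m) * q ^ t := by
    rw [← pow_mul, ← pow_add]
    congr 1
    rw [ht]
    exact (Nat.div_add_mod s m).symm ▸ rfl
  have hper : ∀ x : K, x ^ q ^ s = x ^ q ^ t := by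
    intro x
    rw [hqs, pow_mul]
    congr 1
    have := FiniteField.pow_card_pow (K := K) (s / m) x
    rwa [hK] at this
  set β : K := α ^ q ^ t with hβ
  have hβα : β ≠ α := aux_frob_ne K hK hq2 ht0 htm α hα
  have hγt : e γ ≠ (β + α) ^ 2 := hγ t ht0 htm hgcd'
  -- γ is fixed by the Frobenius
  have hγfix : (e γ) ^ q ^ s = e γ := by
    rw [← map_pow]
    congr 1
    have := FiniteField.pow_card_pow (K := Fq) s γ
    rwa [hq] at this
  -- the four vectors
  set r₁ : Fin 4 → K := ![1, 0, α, α ^ 2] with hr₁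
  set r₂ : Fin 4 → K := ![0, 1, α ^ 2, e γ * α] with hr₂
  set w₁ : Fin 4 → K := ![1, 0, β, β ^ 2] with hw₁
  set w₂ : Fin 4 → K := ![0, 1, β ^ 2, e γ * β] with hw₂
  -- linear independence of the four vectors over K
  have hli : LinearIndependent K ![r₁, r₂, w₁, w₂] := by
    rw [Fintype.linearIndependent_iff]
    intro c hc
    rw [Fin.sum_univ_four] at hc
    simp only [Matrix.cons_val_zero, Matrix.cons_val_one, Matrix.head_cons,
      Matrix.cons_val_two, Matrix.tail_cons, Matrix.cons_val_three] at hc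
    have h0 := congrFun hc 0
    have h1 := congrFun hc 1
    have h2 := congrFun hc 2
    have h3 := congrFun hc 3
    simp only [hr₁, hr₂, hw₁, hw₂, Pi.add_apply, Pi.smul_apply, smul_eq_mul,
      Matrix.cons_val_zero, Matrix.cons_val_one, Matrix.head_cons,
      Matrix.cons_val_two, Matrix.tail_cons, Matrix.cons_val_three, Pi.zero_apply,
      mul_one, mul_zero, add_zero, zero_add] at h0 h1 h2 h3
    -- h0 : c 0 + c 2 = 0, h1 : c 1 + c 3 = 0
    have hδ : α - β ≠ 0 := sub_ne_zero.mpr (Ne.symm hβα)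
    have e2 : (α - β) * (c 0 + c 1 * (α + β)) = 0 := by
      linear_combination h2 - β * h0 - β ^ 2 * h1
    have e3 : (α - β) * (c 0 * (α + β) + c 1 * e γ) = 0 := by
      linear_combination h3 - β ^ 2 * h0 - e γ * β * h1
    have hδ' : α - β ≠ 0 := sub_ne_zero.mpr (Ne.symm hβα)
    have hab2 : c 0 + c 1 * (α + β) = 0 := (mul_eq_zero.mp e2).resolve_left hδ'
    have hcd2 : c 0 * (α + β) + c 1 * e γ = 0 := (mul_eq_zero.mp e3).resolve_left hδ'
    have hkey : c 1 * (e γ - (α + β) ^ 2) = 0 := by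
      linear_combination hcd2 - (α + β) * hab2
    have hfac : e γ - (α + β) ^ 2 ≠ 0 := by
      refine sub_ne_zero.mpr ?_
      rw [add_comm α β]
      exact hγt
    have hc1 : c 1 = 0 := (mul_eq_zero.mp hkey).resolve_right hfac
    have hc0 : c 0 = 0 := by linear_combination hab2 - (α + β) * hc1
    have hc2 : c 2 = 0 := by linear_combination h0 - hc0
    have hc3 : c 3 = 0 := by linear_combination h1 - hc1
    intro i
    fin_cases i
    · exact hc0
    · exact hc1
    · exact hc2
    · exact hc3
  -- the span of the three Gabidulin generators
  set g' : Fin 4 → K := fun j => g j with hg'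
  set gs : Fin 4 → K := fun j => g j ^ q ^ s with hgs
  set gss : Fin 4 → K := fun j => (g j ^ q ^ s) ^ q ^ s with hgss
  set W : Submodule K (Fin 4 → K) := Submodule.span K (Set.range ![g', gs, gss]) with hW
  -- additivity of the q^s power map
  obtain ⟨n, hp, hcard⟩ := FiniteField.card Fq (ringChar Fq)
  set p : ℕ := ringChar Fq with hpdef
  haveI : Fact p.Prime := ⟨hp⟩
  haveI : CharP K p := charP_of_injective_algebraMap (algebraMap Fq K).injective p
  have hqpn : q = p ^ (n : ℕ) := by rw [← hq, hcard]
  have hqps : q ^ s = p ^ ((n : ℕ) * s) := by rw [hqpn, ← pow_mul]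
  have haddq : ∀ x y : K, (x + y) ^ q ^ s = x ^ q ^ s + y ^ q ^ s := by
    intro x y
    rw [hqps]
    exact add_pow_char_pow (R := K) (p := p) x y ((n : ℕ) * s)
  -- C ≤ W
  have hCW : C ≤ W := by
    rw [hCeq, hW]
    apply Submodule.span_le.mpr
    rintro v (rfl | rfl)
    · exact Submodule.subset_span (Set.mem_range.mpr ⟨0, by simp⟩)
    · exact Submodule.subset_span (Set.mem_range.mpr ⟨1, by simp⟩)
  -- the Frobenius image of any codeword is in W
  have hσ : ∀ v, v ∈ C → (fun j => v j ^ q ^ s) ∈ W := by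
    intro v hv
    rw [hCeq] at hv
    obtain ⟨a, b, hab⟩ := Submodule.mem_span_pair.mp hv
    have hvj : ∀ j, v j = a * g j + b * g j ^ q ^ s := by
      intro j; rw [← hab]; simp [hg', hgs]
    have heq : (fun j => v j ^ q ^ s) =
        a ^ q ^ s • gs + b ^ q ^ s • gss := by
      funext j
      simp only [Pi.add_apply, Pi.smul_apply, smul_eq_mul, hgs, hgss]
      rw [hvj j, haddq, mul_pow, mul_pow]
    rw [heq]
    exact Submodule.add_mem _
      (Submodule.smul_mem _ _ (Submodule.subset_span (Set.mem_range.mpr ⟨1, by simp⟩)))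
      (Submodule.smul_mem _ _ (Submodule.subset_span (Set.mem_range.mpr ⟨2, by simp⟩)))
  -- membership of the four vectors
  have hr₁C : r₁ ∈ C := by
    rw [hC]; exact Submodule.subset_span (Set.mem_insert _ _)
  have hr₂C : r₂ ∈ C := by
    rw [hC]; exact Submodule.subset_span (Set.mem_insert_of_mem _ rfl)
  have hqs0 : q ^ s ≠ 0 := by positivity
  have hw₁σ : w₁ = fun j => r₁ j ^ q ^ s := by
    funext j
    fin_cases j
    · show (1 : K) = (1 : K) ^ q ^ s; rw [one_pow]
    · show (0 : K) = (0 : K) ^ q ^ s; rw [zero_pow hqs0]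
    · show β = α ^ q ^ s; rw [hper]
    · show β ^ 2 = (α ^ 2) ^ q ^ s; rw [pow_right_comm, hper]
  have hw₂σ : w₂ = fun j => r₂ j ^ q ^ s := by
    funext j
    fin_cases j
    · show (0 : K) = (0 : K) ^ q ^ s; rw [zero_pow hqs0]
    · show (1 : K) = (1 : K) ^ q ^ s; rw [one_pow]
    · show β ^ 2 = (α ^ 2) ^ q ^ s; rw [pow_right_comm, hper]
    · show e γ * β = (e γ * α) ^ q ^ s; rw [mul_pow, hγfix, hper]
  have hr₁W : r₁ ∈ W := hCW hr₁C
  have hr₂W : r₂ ∈ W := hCW hr₂C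
  have hw₁W : w₁ ∈ W := by rw [hw₁σ]; exact hσ r₁ hr₁C
  have hw₂W : w₂ ∈ W := by rw [hw₂σ]; exact hσ r₂ hr₂C
  -- finrank contradiction
  set ff : Fin 4 → W := fun i => ⟨![r₁, r₂, w₁, w₂] i, by
    fin_cases i
    · exact hr₁W
    · exact hr₂W
    · exact hw₁W
    · exact hw₂W⟩ with hff
  have hffli : LinearIndependent K ff := by
    apply LinearIndependent.of_comp W.subtype
    have : W.subtype ∘ ff = ![r₁, r₂, w₁, w₂] := funext fun i => rfl
    rw [this]
    exact hli
  have h4 : 4 ≤ Module.finrank K W := by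
    have := hffli.fintype_card_le_finrank
    simpa using this
  have h3 : Module.finrank K W ≤ 3 := by
    rw [hW]
    refine le_trans (finrank_span_le_card _) ?_
    rw [Set.toFinset_card]
    exact le_trans (Fintype.card_range_le _) (by simp)
  omega

/-- for `m > 4`, a primitive `α ∈ F_{q^m}` and a quadratic non-residue
`γ ∈ F_q` with `γ ≠ (α^{q^s} + α)²` for all `0 < s < m` with `gcd(s,m) = 1`, the code
spanned by `(1, 0, α, α²)` and `(0, 1, α², γα)` is MRD of dimension 2 but not a
generalized Gabidulin code. -/
theorem stmt16 {q m : ℕ} (Fq K : Type) [Field Fq] [Fintype Fq] [Field K] [Fintype K]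
    [Algebra Fq K] (hq : Fintype.card Fq = q) (hK : Fintype.card K = q ^ m)
    (hm : 4 < m)
    (α : K) (hα : ∀ x : K, x ≠ 0 → ∃ i : ℕ, x = α ^ i)
    (γ : Fq) (hγQNR : ∀ x : Fq, γ ≠ x ^ 2)
    (hγ : ∀ s : ℕ, 0 < s → s < m → Nat.gcd s m = 1 →
      algebraMap Fq K γ ≠ (α ^ q ^ s + α) ^ 2)
    (C : Submodule K (Fin 4 → K))
    (hC : C = Submodule.span K
      ({![1, 0, α, α ^ 2], ![0, 1, α ^ 2, algebraMap Fq K γ * α]} : Set (Fin 4 → K))) :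
    IsMRD Fq C 2 ∧
      ¬ ∃ (s : ℕ) (g : Fin 4 → K), Nat.gcd s m = 1 ∧ LinearIndependent Fq g ∧
        C = Submodule.span K
          ({(fun j => g j), (fun j => (g j) ^ q ^ s)} : Set (Fin 4 → K)) := by
  classical
  set e : Fq →+* K := (algebraMap Fq K) with he
  set r₁ : Fin 4 → K := ![1, 0, α, α ^ 2] with hr₁
  set r₂ : Fin 4 → K := ![0, 1, α ^ 2, e γ * α] with hr₂
  have hpow5 : LinearIndependent Fq (fun i : Fin 5 => α ^ (i : ℕ)) :=
    aux_pow_li Fq K hq hK α hα 5 (by omega)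
  have hpow3 : LinearIndependent Fq (![1, α, α ^ 2] : Fin 3 → K) := by
    have h := aux_pow_li Fq K hq hK α hα 3 (by omega)
    have : (![1, α, α ^ 2] : Fin 3 → K) = fun i : Fin 3 => α ^ (i : ℕ) := by
      funext i; fin_cases i <;> simp
    rw [this]
    exact h
  -- dimension of C
  have hliK : LinearIndependent K ![r₁, r₂] := by
    rw [Fintype.linearIndependent_iff]
    intro c hc
    rw [Fin.sum_univ_two] at hc
    have h0 := congrFun hc 0
    have h1 := congrFun hc 1
    simp only [hr₁, hr₂, Pi.add_apply, Pi.smul_apply, smul_eq_mul,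
      Matrix.cons_val_zero, Matrix.cons_val_one, Matrix.head_cons, Pi.zero_apply,
      mul_one, mul_zero, add_zero, zero_add] at h0 h1
    intro i
    fin_cases i
    · exact h0
    · exact h1
  have hrange2 : Set.range ![r₁, r₂] = ({r₁, r₂} : Set (Fin 4 → K)) := by
    ext v
    constructor
    · rintro ⟨i, rfl⟩
      fin_cases i
      · exact Set.mem_insert _ _
      · exact Set.mem_insert_of_mem _ rfl
    · rintro (rfl | rfl)
      · exact ⟨0, rfl⟩
      · exact ⟨1, rfl⟩
  have hdim : Module.finrank K C = 2 := by
    rw [hC, ← hrange2, finrank_span_eq_card hliK]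
    simp
  refine ⟨⟨hdim, ?_⟩, aux_not_gab Fq K hq hK hm α hα γ hγ C hC⟩
  -- minimum rank distance
  have hr₂C : r₂ ∈ C := by
    rw [hC]; exact Submodule.subset_span (Set.mem_insert_of_mem _ rfl)
  have hr₂0 : r₂ ≠ 0 := by
    intro h
    have := congrFun h 1
    simp [hr₂] at this
  have hγ0 : γ ≠ 0 := fun h => hγQNR 0 (by rw [h]; ring)
  have hrank3 : rankQ Fq r₂ = 3 := by
    have hspan : Submodule.span Fq (Set.range r₂) =
        Submodule.span Fq (Set.range (![1, α, α ^ 2] : Fin 3 → K)) := by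
      apply le_antisymm
      · apply Submodule.span_le.mpr
        rintro v ⟨j, rfl⟩
        fin_cases j
        · show (0 : K) ∈ _; exact Submodule.zero_mem _
        · exact Submodule.subset_span ⟨0, by simp [hr₂]⟩
        · exact Submodule.subset_span ⟨2, by simp [hr₂]⟩
        · show e γ * α ∈ _
          rw [← Algebra.smul_def]
          exact Submodule.smul_mem _ _ (Submodule.subset_span ⟨1, by simp⟩)
      · apply Submodule.span_le.mpr
        rintro v ⟨j, rfl⟩
        fin_cases j
        · exact Submodule.subset_span ⟨1, rfl⟩
        · show α ∈ _
          have h3 : r₂ 3 ∈ Submodule.span Fq (Set.range r₂) :=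
            Submodule.subset_span ⟨3, rfl⟩
          have := Submodule.smul_mem _ γ⁻¹ h3
          have heq : γ⁻¹ • r₂ 3 = α := by
            show γ⁻¹ • (e γ * α) = α
            rw [Algebra.smul_def, ← mul_assoc, ← _root_.map_mul,
              inv_mul_cancel₀ hγ0, _root_.map_one, one_mul]
          rwa [heq] at this
        · exact Submodule.subset_span ⟨2, rfl⟩
    rw [rankQ, hspan, finrank_span_eq_card hpow3]
    simp
  have h3mem : 3 ∈ rankQ Fq '' {c : Fin 4 → K | c ∈ C ∧ c ≠ 0} :=
    ⟨r₂, ⟨hr₂C, hr₂0⟩, hrank3⟩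
  have hlb : ∀ y ∈ rankQ Fq '' {c : Fin 4 → K | c ∈ C ∧ c ≠ 0}, 3 ≤ y := by
    rintro y ⟨c, ⟨hcC, hc0⟩, rfl⟩
    have : c ∈ Submodule.span K
        ({![1, 0, α, α ^ 2], ![0, 1, α ^ 2, algebraMap Fq K γ * α]} : Set (Fin 4 → K)) := by
      rw [← hC]; exact hcC
    exact aux_rank_ge Fq K hq hK hm α hα γ hγQNR hpow5 c this hc0
  show minRankDist Fq C = 4 - 2 + 1
  rw [minRankDist]
  norm_num
  exact le_antisymm (Nat.sInf_le h3mem) (le_csInf ⟨3, h3mem⟩ hlb)
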